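/- Let k be a field of characteristic 0, X a finite type, and L = FreeLieAlgebra k X, with degree components L_n defined by L₁ = span of the generators and L_{n+1} = [L₁, L_n] (the span of brackets). Let r be a homogeneous Lie ideal of L (i.e., r is spanned by ⋃_n (r ∩ L_n)) with r ∩ L₁ = 0, and set g = L/r and ḡ = L/⟨r ∩ L₂⟩, where ⟨r ∩ L₂⟩ is the Lie ideal generated by r ∩ L₂. Let ι : L → T(V) be the canonical Lie morphism into the tensor algebra T(V) = FreeAlgebra k X (V the span of the generators), let J be the two-sided ideal of T(V) generated by ι(r), and let J₂ = J ∩ (V⊗V). Then there is a k-algebra isomorphism T(V)/⟨J₂⟩ ≅ U(ḡ); that is, the quadratic closure of the universal enveloping algebra U(g) = T(V)/J is the universal enveloping algebra of the quadratic Lie algebra ḡ. -/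

import Mathlib

noncomputable section

variable (k : Type*) [Field k] [CharZero k] (X : Type*)

/-- The degree-one component `L₁` of the free Lie algebra: the span of the generators. -/
def freeLieDegOne : Submodule k (FreeLieAlgebra k X) :=
  Submodule.span k (Set.range (FreeLieAlgebra.of k : X → FreeLieAlgebra k X))

/-- The degree components of the free Lie algebra: `freeLieDeg k X n` is `L_{n+1}`,
where `L₁` is the span of the generators and `L_{n+1} = [L₁, L_n]` (the span of
brackets). -/
def freeLieDeg : ℕ → Submodule k (FreeLieAlgebra k X)
  | 0 => freeLieDegOne k X
  | n + 1 => Submodule.span k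
      {z | ∃ x ∈ freeLieDegOne k X, ∃ y ∈ freeLieDeg n, z = ⁅x, y⁆}

attribute [local instance] LieRing.ofAssociativeRing

/-- The canonical Lie algebra morphism `ι` from the free Lie algebra on `X` into the
free associative algebra `T(V) = FreeAlgebra k X` (the tensor algebra on the free
module `V` spanned by the generators), sending generators to generators. -/
def freeLieToFreeAlgebra : FreeLieAlgebra k X →ₗ⁅k⁆ FreeAlgebra k X :=
  FreeLieAlgebra.lift k (FreeAlgebra.ι k)

/-- The two-sided ideal `J` of `T(V) = FreeAlgebra k X` generated by `ι(r)`, as a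
`k`-subspace: the span of all products `a * ι s * b` with `s ∈ r`. -/
def twoSidedSpan (r : LieIdeal k (FreeLieAlgebra k X)) :
    Submodule k (FreeAlgebra k X) :=
  Submodule.span k
    {z | ∃ a b : FreeAlgebra k X, ∃ s ∈ r, z = a * freeLieToFreeAlgebra k X s * b}

/-- The degree-two part `V ⊗ V` of `T(V) = FreeAlgebra k X`: the span of products of
two generators. -/
def freeAlgebraDegTwo : Submodule k (FreeAlgebra k X) :=
  Submodule.span k {z | ∃ x y : X, z = FreeAlgebra.ι k x * FreeAlgebra.ι k y}

set_option linter.unusedSectionVars false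
set_option linter.unusedVariables false


namespace Stmt11Aux

variable {k X}



/-- Submodule of the free algebra of elements supported on words whose length satisfies `P`. -/
def lenSet (k : Type*) [Field k] (X : Type*) (P : ℕ → Prop) : Submodule k (FreeAlgebra k X) :=
  (MonoidAlgebra.supported k k {w : FreeMonoid X | P w.length}).comap
    (FreeAlgebra.equivMonoidAlgebraFreeMonoid : FreeAlgebra k X ≃ₐ[k] _).toLinearMap

lemma mem_lenSet {P : ℕ → Prop} {a : FreeAlgebra k X} :
    a ∈ lenSet k X P ↔ ∀ w ∈ (FreeAlgebra.equivMonoidAlgebraFreeMonoid a).coeff.support,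
      P (FreeMonoid.length w) := by
  simp only [lenSet, Submodule.mem_comap, MonoidAlgebra.mem_supported, Set.subset_def,
    Finset.mem_coe, Finsupp.mem_support_iff, Set.mem_setOf_eq, AlgEquiv.toLinearMap_apply]

lemma lenSet_mul {P Q R : ℕ → Prop} (h : ∀ m n, P m → Q n → R (m + n))
    {a b : FreeAlgebra k X} (ha : a ∈ lenSet k X P) (hb : b ∈ lenSet k X Q) :
    a * b ∈ lenSet k X R := by
  classical
  rw [mem_lenSet] at ha hb ⊢
  intro w hw
  rw [map_mul] at hw
  have := MonoidAlgebra.support_coeff_mul_subset _ _ hw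
  rw [Finset.mem_mul] at this
  obtain ⟨u, hu, v, hv, rfl⟩ := this
  rw [FreeMonoid.length_mul]
  exact h _ _ (ha u hu) (hb v hv)

lemma lenSet_mono {P Q : ℕ → Prop} (h : ∀ n, P n → Q n) :
    lenSet k X P ≤ lenSet k X Q := fun a ha => by
  rw [mem_lenSet] at ha ⊢; exact fun w hw => h _ (ha w hw)

lemma mem_lenSet_top (P : ℕ → Prop) (hP : ∀ n, P n) (a : FreeAlgebra k X) :
    a ∈ lenSet k X P := by rw [mem_lenSet]; intro w _; exact hP _

lemma ι_mem_lenSet_one (x : X) : FreeAlgebra.ι k x ∈ lenSet k X (· = 1) := by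
  rw [mem_lenSet]
  intro w hw
  have : FreeAlgebra.equivMonoidAlgebraFreeMonoid (FreeAlgebra.ι k x)
      = MonoidAlgebra.single (FreeMonoid.of x) (1 : k) := by
    simp [FreeAlgebra.equivMonoidAlgebraFreeMonoid, MonoidAlgebra.of_apply]
  rw [this] at hw
  classical
  rw [MonoidAlgebra.coeff_single, Finsupp.support_single_ne_zero _ one_ne_zero] at hw
  simp only [Finset.mem_singleton] at hw
  subst hw
  simp

/-- The projection onto the degree-two component. -/
def proj2 (k : Type*) [Field k] (X : Type*) : FreeAlgebra k X →ₗ[k] FreeAlgebra k X := by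
  classical
  exact (FreeAlgebra.equivMonoidAlgebraFreeMonoid (R := k) (X := X)).symm.toLinearMap ∘ₗ
    ({ toFun := fun x => MonoidAlgebra.ofCoeff
          (Finsupp.filter (fun w : FreeMonoid X => w.length = 2) x.coeff)
       map_add' := fun x y => MonoidAlgebra.coeff_injective
          (Finsupp.filter_add (v := x.coeff) (v' := y.coeff))
       map_smul' := fun c x => MonoidAlgebra.coeff_injective
          (Finsupp.filter_smul (b := c) (v := x.coeff)) } :
      MonoidAlgebra k (FreeMonoid X) →ₗ[k] MonoidAlgebra k (FreeMonoid X)) ∘ₗ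
    (FreeAlgebra.equivMonoidAlgebraFreeMonoid (R := k) (X := X)).toLinearMap

lemma proj2_eq_self {a : FreeAlgebra k X} (ha : a ∈ lenSet k X (· = 2)) :
    proj2 k X a = a := by
  classical
  rw [mem_lenSet] at ha
  have : Finsupp.filter (fun w : FreeMonoid X => w.length = 2)
      (FreeAlgebra.equivMonoidAlgebraFreeMonoid a).coeff = (FreeAlgebra.equivMonoidAlgebraFreeMonoid a).coeff := by
    ext w
    rw [Finsupp.filter_apply]
    split_ifs with h
    · rfl
    · by_contra hne
      exact h (ha w (Finsupp.mem_support_iff.2 fun h0 => hne h0.symm))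
  simp only [proj2, LinearMap.coe_comp, Function.comp_apply, AlgEquiv.toLinearMap_apply,
    LinearMap.coe_mk, AddHom.coe_mk]
  rw [this, MonoidAlgebra.ofCoeff_coeff]
  exact FreeAlgebra.equivMonoidAlgebraFreeMonoid.symm_apply_apply a

lemma proj2_eq_zero {a : FreeAlgebra k X} (ha : a ∈ lenSet k X (3 ≤ ·)) :
    proj2 k X a = 0 := by
  classical
  rw [mem_lenSet] at ha
  have : Finsupp.filter (fun w : FreeMonoid X => w.length = 2)
      (FreeAlgebra.equivMonoidAlgebraFreeMonoid a).coeff = 0 := by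
    ext w
    rw [Finsupp.filter_apply]
    split_ifs with h
    · by_contra hne
      have := ha w (Finsupp.mem_support_iff.2 hne)
      omega
    · rfl
  simp only [proj2, LinearMap.coe_comp, Function.comp_apply, AlgEquiv.toLinearMap_apply,
    LinearMap.coe_mk, AddHom.coe_mk]
  rw [this]
  exact map_zero _

lemma exists_const (a : FreeAlgebra k X) :
    ∃ c : k, a - algebraMap k (FreeAlgebra k X) c ∈ lenSet k X (1 ≤ ·) := by
  classical
  refine ⟨(FreeAlgebra.equivMonoidAlgebraFreeMonoid a).coeff 1, ?_⟩
  rw [mem_lenSet]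
  intro w hw
  rw [map_sub, AlgEquiv.commutes] at hw
  by_contra hlt
  have hw1 : w = 1 := by
    have : w.length = 0 := by omega
    exact FreeMonoid.length_eq_zero.1 this
  subst hw1
  rw [Finsupp.mem_support_iff] at hw
  apply hw
  rw [MonoidAlgebra.coeff_sub, Finsupp.sub_apply]
  have : (algebraMap k (MonoidAlgebra k (FreeMonoid X))
      ((FreeAlgebra.equivMonoidAlgebraFreeMonoid a).coeff 1)).coeff 1
      = (FreeAlgebra.equivMonoidAlgebraFreeMonoid a).coeff 1 := by
    rw [MonoidAlgebra.coe_algebraMap]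
    simp
  rw [this, sub_self]


lemma freeLieToFreeAlgebra_of (x : X) :
    freeLieToFreeAlgebra k X (FreeLieAlgebra.of k x) = FreeAlgebra.ι k x := by
  simp [freeLieToFreeAlgebra, FreeLieAlgebra.lift_of_apply]

lemma lie_eq (a b : FreeAlgebra k X) : ⁅a, b⁆ = a * b - b * a := Ring.lie_def a b

lemma ι_degOne_mem_V {s : FreeLieAlgebra k X} (hs : s ∈ freeLieDegOne k X) :
    freeLieToFreeAlgebra k X s ∈ Submodule.span k (Set.range (FreeAlgebra.ι k : X → FreeAlgebra k X)) := by
  induction hs using Submodule.span_induction with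
  | mem x hx =>
    obtain ⟨y, rfl⟩ := hx
    rw [freeLieToFreeAlgebra_of]
    exact Submodule.subset_span ⟨y, rfl⟩
  | zero => rw [map_zero]; exact Submodule.zero_mem _
  | add x y _ _ hx hy => rw [map_add]; exact Submodule.add_mem _ hx hy
  | smul c x _ hx => rw [map_smul]; exact Submodule.smul_mem _ _ hx

lemma ι_degTwo_mem {s : FreeLieAlgebra k X} (hs : s ∈ freeLieDeg k X 1) :
    freeLieToFreeAlgebra k X s ∈ freeAlgebraDegTwo k X := by
  have key : ∀ u ∈ Submodule.span k (Set.range (FreeAlgebra.ι k : X → FreeAlgebra k X)),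
      ∀ v ∈ Submodule.span k (Set.range (FreeAlgebra.ι k : X → FreeAlgebra k X)),
      u * v ∈ freeAlgebraDegTwo k X := by
    intro u hu
    induction hu using Submodule.span_induction with
    | mem u hu =>
      intro v hv
      induction hv using Submodule.span_induction with
      | mem v hv =>
        obtain ⟨x, rfl⟩ := hu; obtain ⟨y, rfl⟩ := hv
        exact Submodule.subset_span ⟨x, y, rfl⟩
      | zero => rw [mul_zero]; exact Submodule.zero_mem _
      | add v w _ _ hv hw => rw [mul_add]; exact Submodule.add_mem _ hv hw
      | smul c v _ hv => rw [mul_smul_comm]; exact Submodule.smul_mem _ _ hv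
    | zero => intro v hv; rw [zero_mul]; exact Submodule.zero_mem _
    | add u w _ _ hu hw => intro v hv; rw [add_mul]; exact Submodule.add_mem _ (hu v hv) (hw v hv)
    | smul c u _ hu => intro v hv; rw [smul_mul_assoc]; exact Submodule.smul_mem _ _ (hu v hv)
  rw [show freeLieDeg k X 1 = Submodule.span k
      {z | ∃ x ∈ freeLieDegOne k X, ∃ y ∈ freeLieDeg k X 0, z = ⁅x, y⁆} from rfl] at hs
  induction hs using Submodule.span_induction with
  | mem z hz =>
    obtain ⟨x, hx, y, hy, rfl⟩ := hz
    rw [LieHom.map_lie, lie_eq]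
    have hy' : y ∈ freeLieDegOne k X := hy
    exact Submodule.sub_mem _
      (key _ (ι_degOne_mem_V hx) _ (ι_degOne_mem_V hy'))
      (key _ (ι_degOne_mem_V hy') _ (ι_degOne_mem_V hx))
  | zero => rw [map_zero]; exact Submodule.zero_mem _
  | add x y _ _ hx hy => rw [map_add]; exact Submodule.add_mem _ hx hy
  | smul c x _ hx => rw [map_smul]; exact Submodule.smul_mem _ _ hx


section chunk3

lemma degTwo_le_lenSet : freeAlgebraDegTwo k X ≤ lenSet k X (· = 2) := by
  rw [freeAlgebraDegTwo, Submodule.span_le]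
  rintro z ⟨x, y, rfl⟩
  exact lenSet_mul (by omega) (ι_mem_lenSet_one x) (ι_mem_lenSet_one y)

lemma ι_degOne_mem_lenSet {s : FreeLieAlgebra k X} (hs : s ∈ freeLieDegOne k X) :
    freeLieToFreeAlgebra k X s ∈ lenSet k X (· = 1) := by
  induction hs using Submodule.span_induction with
  | mem x hx =>
    obtain ⟨y, rfl⟩ := hx
    rw [freeLieToFreeAlgebra_of]
    exact ι_mem_lenSet_one y
  | zero => rw [map_zero]; exact Submodule.zero_mem _
  | add x y _ _ hx hy => rw [map_add]; exact Submodule.add_mem _ hx hy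
  | smul c x _ hx => rw [map_smul]; exact Submodule.smul_mem _ _ hx

lemma ι_deg_mem_lenSet (n : ℕ) {s : FreeLieAlgebra k X} (hs : s ∈ freeLieDeg k X n) :
    freeLieToFreeAlgebra k X s ∈ lenSet k X (· = n + 1) := by
  induction n generalizing s with
  | zero => exact ι_degOne_mem_lenSet hs
  | succ n ih =>
    rw [show freeLieDeg k X (n + 1) = Submodule.span k
        {z | ∃ x ∈ freeLieDegOne k X, ∃ y ∈ freeLieDeg k X n, z = ⁅x, y⁆} from rfl] at hs
    induction hs using Submodule.span_induction with
    | mem z hz =>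
      obtain ⟨x, hx, y, hy, rfl⟩ := hz
      rw [LieHom.map_lie, lie_eq]
      have h1 : freeLieToFreeAlgebra k X x ∈ lenSet k X (· = 1) :=
        ι_degOne_mem_lenSet hx
      refine Submodule.sub_mem _ ?_ ?_
      · exact lenSet_mul (fun a b ha hb => by omega) h1 (ih hy)
      · exact lenSet_mul (fun a b ha hb => by omega) (ih hy) h1
    | zero => rw [map_zero]; exact Submodule.zero_mem _
    | add x y _ _ hx hy => rw [map_add]; exact Submodule.add_mem _ hx hy
    | smul c x _ hx => rw [map_smul]; exact Submodule.smul_mem _ _ hx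

end chunk3

section chunk4

lemma lenSet_eq_le {n : ℕ} : lenSet k X (· = n) ≤ lenSet k X (n ≤ ·) :=
  lenSet_mono (fun m hm => le_of_eq hm.symm)

lemma lenSet_le_anti {p q : ℕ} (h : p ≤ q) : lenSet k X (q ≤ ·) ≤ lenSet k X (p ≤ ·) :=
  lenSet_mono (fun m hm => le_trans h hm)

lemma lenSet_mul_le {p q : ℕ} {a b : FreeAlgebra k X}
    (ha : a ∈ lenSet k X (p ≤ ·)) (hb : b ∈ lenSet k X (q ≤ ·)) :
    a * b ∈ lenSet k X (p + q ≤ ·) :=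
  lenSet_mul (fun m n hm hn => add_le_add hm hn) ha hb

lemma mem_lenSet_le_zero (a : FreeAlgebra k X) : a ∈ lenSet k X (0 ≤ ·) :=
  mem_lenSet_top _ (fun n => Nat.zero_le n) a

variable (r : LieIdeal k (FreeLieAlgebra k X))

lemma image_le :
    Submodule.map (freeLieToFreeAlgebra k X).toLinearMap
        ((r : Submodule k (FreeLieAlgebra k X)) ⊓ freeLieDeg k X 1) ≤
      twoSidedSpan k X r ⊓ freeAlgebraDegTwo k X := by
  rintro _ ⟨s, ⟨hsr, hs1⟩, rfl⟩
  refine Submodule.mem_inf.2 ⟨?_, ι_degTwo_mem hs1⟩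
  exact Submodule.subset_span ⟨1, 1, s, hsr, by rw [one_mul, mul_one]; rfl⟩

lemma main_incl
    (hhom : (r : Submodule k (FreeLieAlgebra k X)) =
      ⨆ n : ℕ, ((r : Submodule k (FreeLieAlgebra k X)) ⊓ freeLieDeg k X n))
    (hdeg1 : (r : Submodule k (FreeLieAlgebra k X)) ⊓ freeLieDeg k X 0 = ⊥) :
    twoSidedSpan k X r ⊓ freeAlgebraDegTwo k X ≤
      Submodule.map (freeLieToFreeAlgebra k X).toLinearMap
        ((r : Submodule k (FreeLieAlgebra k X)) ⊓ freeLieDeg k X 1) := by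
  set img := Submodule.map (freeLieToFreeAlgebra k X).toLinearMap
      ((r : Submodule k (FreeLieAlgebra k X)) ⊓ freeLieDeg k X 1) with himg
  have hproj : ∀ z ∈ twoSidedSpan k X r, proj2 k X z ∈ img := by
    intro z hz
    induction hz using Submodule.span_induction with
    | mem z hz =>
      obtain ⟨a, b, s, hsr, rfl⟩ := hz
      have hsr' : s ∈ ⨆ n : ℕ, ((r : Submodule k (FreeLieAlgebra k X)) ⊓ freeLieDeg k X n) := by
        rw [← hhom]; exact hsr
      refine Submodule.iSup_induction
        (motive := fun y => proj2 k X (a * freeLieToFreeAlgebra k X y * b) ∈ img) _ hsr' ?_ ?_ ?_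
      · intro n s hs
        match n with
        | 0 =>
          rw [hdeg1] at hs
          simp only [Submodule.mem_bot] at hs
          subst hs
          rw [map_zero (freeLieToFreeAlgebra k X), mul_zero, zero_mul, map_zero]
          exact Submodule.zero_mem _
        | 1 =>
          obtain ⟨c, hc⟩ := exists_const a
          obtain ⟨d, hd⟩ := exists_const b
          have hs1 : s ∈ freeLieDeg k X 1 := hs.2
          set t := freeLieToFreeAlgebra k X s with ht
          have ht2 : t ∈ lenSet k X (· = 2) := ι_deg_mem_lenSet 1 hs1
          have hdecomp : a * t * b =
              (a - algebraMap k (FreeAlgebra k X) c) * (t * b) +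
              algebraMap k (FreeAlgebra k X) c * (t * (b - algebraMap k (FreeAlgebra k X) d)) +
              (c * d) • t := by
            rw [Algebra.smul_def, map_mul, mul_assoc (algebraMap k (FreeAlgebra k X) c),
              Algebra.commutes d t]
            noncomm_ring
          show proj2 k X (a * t * b) ∈ img
          rw [hdecomp, map_add, map_add]
          have hz1 : proj2 k X ((a - algebraMap k (FreeAlgebra k X) c) * (t * b)) = 0 := by
            have h1 : t * b ∈ lenSet k X (2 + 0 ≤ ·) :=
              lenSet_mul_le (lenSet_eq_le ht2) (mem_lenSet_le_zero b)
            have h2 := lenSet_mul_le hc h1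
            exact proj2_eq_zero (lenSet_le_anti (p := 3) (q := 1 + (2 + 0)) (by norm_num) h2)
          have hz2 : proj2 k X (algebraMap k (FreeAlgebra k X) c *
              (t * (b - algebraMap k (FreeAlgebra k X) d))) = 0 := by
            have h1 : t * (b - algebraMap k (FreeAlgebra k X) d) ∈ lenSet k X (2 + 1 ≤ ·) :=
              lenSet_mul_le (lenSet_eq_le ht2) hd
            have h2 := lenSet_mul_le (mem_lenSet_le_zero (algebraMap k (FreeAlgebra k X) c)) h1
            exact proj2_eq_zero (lenSet_le_anti (p := 3) (q := 0 + (2 + 1)) (by norm_num) h2)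
          rw [hz1, hz2, zero_add, zero_add, map_smul, proj2_eq_self ht2]
          have heq : (c * d) • t = (freeLieToFreeAlgebra k X).toLinearMap ((c * d) • s) := by
            rw [LinearMap.map_smul]; rfl
          rw [heq]
          exact Submodule.mem_map_of_mem (Submodule.smul_mem _ _ hs)
        | (m + 2) =>
          have ht : freeLieToFreeAlgebra k X s ∈ lenSet k X (· = m + 3) :=
            ι_deg_mem_lenSet (m + 2) hs.2
          have hmem : a * freeLieToFreeAlgebra k X s * b ∈ lenSet k X (3 ≤ ·) := by
            have h1 := lenSet_mul_le
              (lenSet_mul_le (mem_lenSet_le_zero a) (lenSet_eq_le ht))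
              (mem_lenSet_le_zero b)
            exact lenSet_le_anti (p := 3) (q := 0 + (m + 3) + 0) (by omega) h1
          show proj2 k X (a * freeLieToFreeAlgebra k X s * b) ∈ img
          rw [proj2_eq_zero hmem]
          exact Submodule.zero_mem _
      · show proj2 k X (a * freeLieToFreeAlgebra k X 0 * b) ∈ img
        rw [map_zero (freeLieToFreeAlgebra k X), mul_zero, zero_mul, map_zero]
        exact Submodule.zero_mem _
      · intro u v hu hv
        show proj2 k X (a * freeLieToFreeAlgebra k X (u + v) * b) ∈ img
        rw [map_add (freeLieToFreeAlgebra k X), mul_add, add_mul, map_add]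
        exact Submodule.add_mem _ hu hv
    | zero => rw [map_zero]; exact Submodule.zero_mem _
    | add x y _ _ hx hy => rw [map_add]; exact Submodule.add_mem _ hx hy
    | smul c x _ hx => rw [map_smul]; exact Submodule.smul_mem _ _ hx
  intro z hz
  rw [Submodule.mem_inf] at hz
  have := hproj z hz.1
  rwa [proj2_eq_self (degTwo_le_lenSet hz.2)] at this

end chunk4

section chunk5

/-- Lift of a Lie algebra morphism through a quotient by a Lie ideal contained in its kernel. -/
def lieQuotLift (I : LieIdeal k (FreeLieAlgebra k X)) {A : Type*} [Ring A] [Algebra k A]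
    (f : FreeLieAlgebra k X →ₗ⁅k⁆ A) (h : ∀ x ∈ I, f x = 0) :
    (FreeLieAlgebra k X ⧸ I) →ₗ⁅k⁆ A :=
  { (I : Submodule k (FreeLieAlgebra k X)).liftQ f.toLinearMap
      (fun x hx => by simpa using h x hx) with
    map_lie' := by
      rintro ⟨x⟩ ⟨y⟩
      exact f.map_lie x y }

lemma lieQuotLift_mk (I : LieIdeal k (FreeLieAlgebra k X)) {A : Type*} [Ring A] [Algebra k A]
    (f : FreeLieAlgebra k X →ₗ⁅k⁆ A) (h : ∀ x ∈ I, f x = 0) (x : FreeLieAlgebra k X) :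
    lieQuotLift I f h (LieSubmodule.Quotient.mk (N := I) x) = f x := rfl

/-- The quotient map as a morphism of Lie algebras. -/
def qHom (I : LieIdeal k (FreeLieAlgebra k X)) :
    FreeLieAlgebra k X →ₗ⁅k⁆ (FreeLieAlgebra k X ⧸ I) :=
  { (I : Submodule k (FreeLieAlgebra k X)).mkQ with
    map_lie' := fun {x y} => LieSubmodule.Quotient.mk_bracket (I := I) x y }

lemma qHom_apply (I : LieIdeal k (FreeLieAlgebra k X)) (x : FreeLieAlgebra k X) :
    qHom I x = LieSubmodule.Quotient.mk (N := I) x := rfl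

lemma qHom_surjective (I : LieIdeal k (FreeLieAlgebra k X)) :
    Function.Surjective (qHom I) := by
  rintro ⟨x⟩
  exact ⟨x, rfl⟩

end chunk5

end Stmt11Aux

/-- Let `k` be a field of characteristic 0, `X` a finite type,
`L = FreeLieAlgebra k X` with degree components `L_n`, and `r` a homogeneous Lie ideal
of `L` with `r ∩ L₁ = 0`; set `g = L/r` and `ḡ = L/⟨r ∩ L₂⟩`.  Let
`ι : L → T(V) = FreeAlgebra k X` be the canonical Lie morphism, `J` the two-sided
ideal of `T(V)` generated by `ι(r)`, and `J₂ = J ∩ (V ⊗ V)`.  Then there is a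
`k`-algebra isomorphism `T(V)/⟨J₂⟩ ≅ U(ḡ)`: the quadratic closure of
`U(g) = T(V)/J` is the universal enveloping algebra of the quadratic Lie algebra
`ḡ`. -/
theorem stmt11 [Fintype X] (r : LieIdeal k (FreeLieAlgebra k X))
    -- `r` is homogeneous: it is spanned by `⋃ n (r ∩ L_n)`:
    (hhom : (r : Submodule k (FreeLieAlgebra k X)) =
      ⨆ n : ℕ, ((r : Submodule k (FreeLieAlgebra k X)) ⊓ freeLieDeg k X n))
    -- `r ∩ L₁ = 0`:
    (hdeg1 : (r : Submodule k (FreeLieAlgebra k X)) ⊓ freeLieDeg k X 0 = ⊥) :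
    Nonempty
      (RingQuot (fun a b : FreeAlgebra k X =>
          a ∈ twoSidedSpan k X r ⊓ freeAlgebraDegTwo k X ∧ b = 0) ≃ₐ[k]
        UniversalEnvelopingAlgebra k
          (FreeLieAlgebra k X ⧸
            LieSubmodule.lieSpan k (FreeLieAlgebra k X)
              (((r : Submodule k (FreeLieAlgebra k X)) ⊓ freeLieDeg k X 1 :
                  Submodule k (FreeLieAlgebra k X)) :
                Set (FreeLieAlgebra k X)))) := by
  classical
  set I : LieIdeal k (FreeLieAlgebra k X) := LieSubmodule.lieSpan k (FreeLieAlgebra k X)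
      (((r : Submodule k (FreeLieAlgebra k X)) ⊓ freeLieDeg k X 1 :
          Submodule k (FreeLieAlgebra k X)) : Set (FreeLieAlgebra k X)) with hI
  set rel : FreeAlgebra k X → FreeAlgebra k X → Prop :=
    fun a b => a ∈ twoSidedSpan k X r ⊓ freeAlgebraDegTwo k X ∧ b = 0 with hrel
  set f : FreeAlgebra k X →ₐ[k] UniversalEnvelopingAlgebra k (FreeLieAlgebra k X ⧸ I) :=
    FreeAlgebra.lift k
      (fun x => UniversalEnvelopingAlgebra.ι k (Stmt11Aux.qHom I (FreeLieAlgebra.of k x)))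
      with hfdef
  have key : ∀ s : FreeLieAlgebra k X,
      f (freeLieToFreeAlgebra k X s)
        = UniversalEnvelopingAlgebra.ι k (Stmt11Aux.qHom I s) := by
    have h : (AlgHom.toLieHom f).comp (freeLieToFreeAlgebra k X)
        = (UniversalEnvelopingAlgebra.ι k).comp (Stmt11Aux.qHom I) :=
      FreeLieAlgebra.hom_ext (fun x => by
        simp only [LieHom.comp_apply]
        rw [Stmt11Aux.freeLieToFreeAlgebra_of]
        show f (FreeAlgebra.ι k x) = _
        rw [hfdef, FreeAlgebra.lift_ι_apply])
    exact fun s => DFunLike.congr_fun h s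
  have hf : ∀ ⦃a b : FreeAlgebra k X⦄, rel a b → f a = f b := by
    rintro a b ⟨haM, rfl⟩
    rw [map_zero]
    obtain ⟨s, hsmem, rfl⟩ := Stmt11Aux.main_incl r hhom hdeg1 haM
    show f (freeLieToFreeAlgebra k X s) = 0
    rw [key s]
    have h0 : Stmt11Aux.qHom I s = 0 := by
      rw [Stmt11Aux.qHom_apply]
      exact (LieSubmodule.Quotient.mk_eq_zero').2 (LieSubmodule.subset_lieSpan hsmem)
    rw [h0, map_zero]
  set F : RingQuot rel →ₐ[k] UniversalEnvelopingAlgebra k (FreeLieAlgebra k X ⧸ I) :=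
    RingQuot.liftAlgHom k ⟨f, hf⟩ with hF
  set g0 : FreeLieAlgebra k X →ₗ⁅k⁆ RingQuot rel :=
    (AlgHom.toLieHom (RingQuot.mkAlgHom k rel)).comp (freeLieToFreeAlgebra k X) with hg0
  have hg : ∀ x ∈ I, g0 x = 0 := by
    have hle : I ≤ g0.ker := by
      rw [hI, LieSubmodule.lieSpan_le]
      intro s hs
      rw [SetLike.mem_coe, LieHom.mem_ker]
      show RingQuot.mkAlgHom k rel (freeLieToFreeAlgebra k X s) = 0
      have hrel' : rel (freeLieToFreeAlgebra k X s) 0 :=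
        ⟨Stmt11Aux.image_le r ⟨s, hs, rfl⟩, rfl⟩
      rw [RingQuot.mkAlgHom_rel k hrel', map_zero]
    exact fun x hx => LieHom.mem_ker.1 (hle hx)
  set G : UniversalEnvelopingAlgebra k (FreeLieAlgebra k X ⧸ I) →ₐ[k] RingQuot rel :=
    UniversalEnvelopingAlgebra.lift k (Stmt11Aux.lieQuotLift I g0 hg) with hG
  have hGF : G.comp F = AlgHom.id k (RingQuot rel) := by
    apply RingQuot.ringQuot_ext'
    apply FreeAlgebra.hom_ext
    funext x
    show G (F (RingQuot.mkAlgHom k rel (FreeAlgebra.ι k x)))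
        = RingQuot.mkAlgHom k rel (FreeAlgebra.ι k x)
    rw [hF, RingQuot.liftAlgHom_mkAlgHom_apply]
    have h1 : (FreeAlgebra.ι k x : FreeAlgebra k X)
        = freeLieToFreeAlgebra k X (FreeLieAlgebra.of k x) :=
      (Stmt11Aux.freeLieToFreeAlgebra_of x).symm
    rw [h1, key]
    rw [hG, UniversalEnvelopingAlgebra.lift_ι_apply]
    rw [Stmt11Aux.qHom_apply, Stmt11Aux.lieQuotLift_mk]
    rfl
  have hFG : F.comp G = AlgHom.id k (UniversalEnvelopingAlgebra k (FreeLieAlgebra k X ⧸ I)) := by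
    apply UniversalEnvelopingAlgebra.hom_ext
    apply LieHom.ext
    intro y
    obtain ⟨s, rfl⟩ := Stmt11Aux.qHom_surjective I y
    show F (G (UniversalEnvelopingAlgebra.ι k (Stmt11Aux.qHom I s)))
        = UniversalEnvelopingAlgebra.ι k (Stmt11Aux.qHom I s)
    rw [hG, UniversalEnvelopingAlgebra.lift_ι_apply, Stmt11Aux.qHom_apply,
      Stmt11Aux.lieQuotLift_mk]
    show F (RingQuot.mkAlgHom k rel (freeLieToFreeAlgebra k X s)) = _
    rw [hF, RingQuot.liftAlgHom_mkAlgHom_apply, key, ← Stmt11Aux.qHom_apply]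
  exact ⟨AlgEquiv.ofAlgHom F G hFG hGF⟩
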